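/- Let B be a closed Riemannian n-manifold carrying fields G_{ij}, A, g, and let f ∈ C^∞(B), t > 0, with (4πt)^{-n/2} ∫_B e^{-f} dvol_B = 1. Then the modified W₊ functional satisfies W₊(G, A, g, f, t) ≥ t·R̄_min + n + (n/2)ln(4π) - ln(t^{-n/2} vol(B, g)), where R̄ is the scalar curvature of the associated total-space metric. -/

import Mathlib

open MeasureTheory Real

lemma Wplus_aux_integrable
    {B : Type*} [TopologicalSpace B] [CompactSpace B]
    [MeasurableSpace B] [OpensMeasurableSpace B]
    (vol : Measure B) [IsFiniteMeasure vol] {g : B → ℝ} (hg : Continuous g) :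
    Integrable g vol := by
  rw [← integrableOn_univ]
  exact hg.continuousOn.integrableOn_compact' isCompact_univ MeasurableSet.univ

/- STATEMENT 7: Lower bound for the modified W₊ functional (Lemma 4.58).
Let B be a closed Riemannian n-manifold (modelled as a compact space with its
volume measure) carrying the fields (G, A, g), f ∈ C^∞(B), t > 0, with
normalization (4πt)^{-n/2} ∫_B e^{-f} dvol = 1.  Then
  W₊(G, A, g, f, t) ≥ t·R̄_min + n + (n/2) ln(4π) - ln(t^{-n/2} vol(B, g)).

By the identity (4.46.5), the W₊ integrand equals
  [ t(|∇f + ∇ln√det G|² + R̄) - f + n ] (4πt)^{-n/2} e^{-f},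
where R̄ is the scalar curvature of the associated total-space metric.  Below
`w x = |∇f + ∇ln√det G|²(x) ≥ 0`, `Rbar` is R̄, and `Rbarmin` its minimum. -/

theorem Wplus_lower_bound
    {B : Type*} [TopologicalSpace B] [CompactSpace B] [Nonempty B]
    [MeasurableSpace B] [OpensMeasurableSpace B]
    (vol : Measure B) [IsFiniteMeasure vol]
    (n : ℕ) (t : ℝ) (ht : 0 < t)
    (f w Rbar : B → ℝ) (Rbarmin : ℝ)
    (hf : Continuous f) (hw : Continuous w) (hRbar : Continuous Rbar)
    -- w = |∇f + ∇ ln √det G|² is nonnegative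
    (hwpos : ∀ x, 0 ≤ w x)
    -- R̄_min is a lower bound for the total-space scalar curvature R̄
    (hmin : ∀ x, Rbarmin ≤ Rbar x)
    -- normalization: (4πt)^{-n/2} ∫_B e^{-f} dvol = 1
    (hnorm : (4 * π * t) ^ (-(n : ℝ) / 2) * ∫ x, Real.exp (-f x) ∂vol = 1)
    -- W₊(G,A,g,f,t), rewritten via the identity (4.46.5)
    (Wplus : ℝ)
    (hW : Wplus = ∫ x, (t * (w x + Rbar x) - f x + n) *
        ((4 * π * t) ^ (-(n : ℝ) / 2) * Real.exp (-f x)) ∂vol) :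
    Wplus ≥ t * Rbarmin + n + ((n : ℝ) / 2) * Real.log (4 * π)
      - Real.log (t ^ (-(n : ℝ) / 2) * (vol Set.univ).toReal) := by
  have hπ : (0:ℝ) < π := Real.pi_pos
  set c : ℝ := (4 * π * t) ^ (-(n : ℝ) / 2) with hc
  clear_value c
  have h4πt : (0:ℝ) < 4 * π * t := by positivity
  have hcpos : 0 < c := by rw [hc]; exact Real.rpow_pos_of_pos h4πt _
  set V : ℝ := (vol Set.univ).toReal with hV
  clear_value V
  -- V > 0
  have hVpos : 0 < V := by
    rw [hV]
    refine ENNReal.toReal_pos (fun h0 => ?_) (measure_ne_top vol _)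
    have hz : vol = 0 := Measure.measure_univ_eq_zero.mp h0
    rw [hz] at hnorm
    simp at hnorm
  set K : ℝ := t * Rbarmin + (n : ℝ) - Real.log V - Real.log c + 1 with hK
  clear_value K
  -- integrability
  have hce : Continuous fun x => Real.exp (-f x) :=
    Real.continuous_exp.comp hf.neg
  have hint1 : Integrable (fun x => (t * (w x + Rbar x) - f x + n) *
      (c * Real.exp (-f x))) vol :=
    Wplus_aux_integrable vol
      ((((continuous_const.mul (hw.add hRbar)).sub hf).add continuous_const).mul
        (continuous_const.mul hce))
  have hintexp : Integrable (fun x => Real.exp (-f x)) vol :=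
    Wplus_aux_integrable vol hce
  have hint2 : Integrable (fun x => K * c * Real.exp (-f x) - 1 / V) vol :=
    ((hintexp.const_mul (K * c)).sub (integrable_const _))
  -- pointwise bound
  have hpt : ∀ x, K * c * Real.exp (-f x) - 1 / V ≤
      (t * (w x + Rbar x) - f x + n) * (c * Real.exp (-f x)) := by
    intro x
    have hp : 0 < c * Real.exp (-f x) := by positivity
    set p : ℝ := c * Real.exp (-f x) with hpdef
    clear_value p
    -- f x = log c - log p
    have hfx : f x = Real.log c - Real.log p := by
      rw [hpdef, Real.log_mul (ne_of_gt hcpos) (Real.exp_ne_zero _), Real.log_exp]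
      ring
    -- q log q ≥ q - 1 for q = p * V
    have hq : 0 < p * V := mul_pos hp hVpos
    have hlog : Real.log (1 / (p * V)) ≤ 1 / (p * V) - 1 :=
      Real.log_le_sub_one_of_pos (by positivity)
    have hlog' : - Real.log (p * V) ≤ (p * V)⁻¹ - 1 := by
      rwa [one_div, Real.log_inv] at hlog
    have hql : (p * V) - 1 ≤ (p * V) * Real.log (p * V) := by
      have h2 := mul_le_mul_of_nonneg_left hlog' hq.le
      have h3 : (p * V) * (p * V)⁻¹ = 1 := mul_inv_cancel₀ (ne_of_gt hq)
      nlinarith [h2, h3]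
    have hlogpv : Real.log (p * V) = Real.log p + Real.log V :=
      Real.log_mul (ne_of_gt hp) (ne_of_gt hVpos)
    have hone : 1 / V * V = 1 := by field_simp
    have h1 : p - 1 / V ≤ p * Real.log p + p * Real.log V := by
      rw [hlogpv] at hql
      nlinarith [hql, hone, hVpos]
    -- main entropy step: - f x * p ≥ (1 - log V - log c) * p - 1/V
    have hent : (1 - Real.log V - Real.log c) * p - 1 / V ≤ - f x * p := by
      rw [hfx]
      nlinarith [h1]
    -- curvature step
    have hcurv : (t * Rbarmin) * p ≤ (t * (w x + Rbar x)) * p := by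
      apply mul_le_mul_of_nonneg_right _ (le_of_lt hp)
      have := hmin x; have := hwpos x
      nlinarith [ht.le]
    have : K * p - 1 / V ≤ (t * (w x + Rbar x) - f x + n) * p := by
      rw [hK]; nlinarith [hent, hcurv]
    calc K * c * Real.exp (-f x) - 1 / V = K * p - 1 / V := by rw [hpdef]; ring
      _ ≤ (t * (w x + Rbar x) - f x + n) * p := this
  -- integrate
  have hmono : ∫ x, (K * c * Real.exp (-f x) - 1 / V) ∂vol ≤
      ∫ x, (t * (w x + Rbar x) - f x + n) * (c * Real.exp (-f x)) ∂vol :=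
    integral_mono hint2 hint1 hpt
  have hleft : ∫ x, (K * c * Real.exp (-f x) - 1 / V) ∂vol = K - 1 := by
    have hKc : (K * c) * ∫ x, Real.exp (-f x) ∂vol = K := by
      rw [mul_assoc, hnorm, mul_one]
    rw [integral_sub (hintexp.const_mul (K * c)) (integrable_const _),
      integral_const_mul, hKc, integral_const]
    simp only [smul_eq_mul, Measure.real, ← hV]
    rw [mul_one_div, div_self (ne_of_gt hVpos)]
  have hWge : K - 1 ≤ Wplus := by
    rw [hW]
    calc K - 1 = ∫ x, (K * c * Real.exp (-f x) - 1 / V) ∂vol := hleft.symm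
      _ ≤ _ := hmono
  -- log algebra
  have hlogc : Real.log c = (-(n : ℝ) / 2) * (Real.log (4 * π) + Real.log t) := by
    rw [hc, Real.log_rpow h4πt,
      Real.log_mul (by positivity) (ne_of_gt ht)]
  have hlogt : Real.log (t ^ (-(n : ℝ) / 2) * V) =
      (-(n : ℝ) / 2) * Real.log t + Real.log V := by
    rw [Real.log_mul (ne_of_gt (Real.rpow_pos_of_pos ht _)) (ne_of_gt hVpos),
      Real.log_rpow ht]
  rw [hlogt]
  rw [hK] at hWge
  rw [hlogc] at hWge
  linarith
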